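/- In the FCFS-F mechanism, for every buyer i with true type θ_i = (v_i, r_i), reporting (v_i, ∅) (the true value while hiding all followers) is a dominant strategy: for every profile θ'_{-i} of reports of the other buyers and every report θ'_i = (v'_i, r'_i) with r'_i ⊆ r_i, the utility from reporting (v_i, ∅) is at least the utility from reporting θ'_i. -/

import Mathlib

open scoped Classical NNReal ENNReal

namespace SNA

/-- A reported type `θ'_i = (v'_i, r'_i)`: a (nonnegative) value for one unit together with
the set of followers to whom the buyer forwards the information. -/
abbrev Profile (N : Type*) := N → ℝ≥0 × Finset N

variable {N : Type*} [Fintype N] [DecidableEq N] [LinearOrder N]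

/-- `reachIn θ rs m i`: in the digraph induced by the reported profile `θ` and the
seller's direct-buyer set `rs` (the seller links to every member of `rs`, and each buyer
`j` links to every member of `(θ j).2`), there is a directed path from the seller to `i`
using exactly `m + 1` edges. -/
def reachIn (θ : Profile N) (rs : Finset N) : ℕ → N → Prop
  | 0, i => i ∈ rs
  | m + 1, i => ∃ j, reachIn θ rs m j ∧ i ∈ (θ j).2

/-- Buyer `i` is connected: reachable from the seller. -/
def Connected (θ : Profile N) (rs : Finset N) (i : N) : Prop :=
  ∃ m, reachIn θ rs m i

/-- `N̂`: the set of connected buyers. -/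
noncomputable def Nhat (θ : Profile N) (rs : Finset N) : Finset N :=
  Finset.univ.filter (Connected θ rs)

/-- `d(i)`: the length of a shortest directed path from the seller to `i`
(`⊤` if `i` is not connected). -/
noncomputable def dNet (θ : Profile N) (rs : Finset N) (i : N) : ℕ∞ :=
  sInf {n : ℕ∞ | ∃ m : ℕ, reachIn θ rs m i ∧ n = (m : ℕ∞) + 1}

/-- Reachability from the seller by a directed path that avoids buyer `j`. -/
def reachInAvoid (θ : Profile N) (rs : Finset N) (j : N) : ℕ → N → Prop
  | 0, i => i ∈ rs ∧ i ≠ j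
  | m + 1, i => ∃ a, reachInAvoid θ rs j m a ∧ i ∈ (θ a).2 ∧ i ≠ j

/-- `j` is a critical parent of `i`: both are connected, `j ≠ i`, and every directed path
from the seller to `i` passes through `j`. -/
def CriticalParent (θ : Profile N) (rs : Finset N) (j i : N) : Prop :=
  Connected θ rs i ∧ Connected θ rs j ∧ j ≠ i ∧ ¬ ∃ m, reachInAvoid θ rs j m i

/-- The descendants of `i` in the diffusion critical tree `T(θ)`, i.e. `i` together with
the connected buyers lying in the subtree of `T(θ)` rooted at `i`; the ancestors of a
buyer in the diffusion critical tree are exactly its critical parents. -/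
noncomputable def desc (θ : Profile N) (rs : Finset N) (i : N) : Finset N :=
  Finset.univ.filter fun j => Connected θ rs j ∧ (j = i ∨ CriticalParent θ rs i j)

/-- `N̂₋ᵢ`: the connected buyers with `i` and all of its descendants in the diffusion
critical tree removed. -/
noncomputable def NhatMinus (θ : Profile N) (rs : Finset N) (i : N) : Finset N :=
  Nhat θ rs \ desc θ rs i

/-- The `k'`-th highest element of a multiset of values (as an element of `ℝ≥0∞`):
`⊤` if `k' ≤ 0`, and `0` if the multiset has fewer than `k'` elements. -/
noncomputable def kthHighest (s : Multiset ℝ≥0) (k' : ℕ) : ℝ≥0∞ :=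
  if k' = 0 then ⊤
  else if s.card < k' then 0
  else ((s.sort (· ≤ ·)).getD (s.card - k') 0 : ℝ≥0)

/-- `v*(S, k')`: the `k'`-th highest reported value among the buyers in `S`. -/
noncomputable def vstar (θ : Profile N) (S : Finset N) (k' : ℕ) : ℝ≥0∞ :=
  kthHighest (S.val.map fun i => (θ i).1) k'

/-- The priority order on the connected buyers: ascending order of the distance `d(·)`,
with ties broken by the fixed linear order on `N` (mergeSort is stable). -/
noncomputable def prioList (θ : Profile N) (rs : Finset N) : List N :=
  ((Nhat θ rs).sort (· ≤ ·)).mergeSort fun i j => decide (dNet θ rs i ≤ dNet θ rs j)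

/-- One run of the distance-based mechanism over a list of buyers (in priority order),
given the current winner set `W` and the remaining number of units `k'`; `extra` is an
additional pool of (dummy) values included in every price computation.
Buyer `i` faces the price `p = v*((N̂₋ᵢ ∖ W) + extra, k')` and wins (paying `p`)
iff her reported value is at least `p`. -/
noncomputable def runAux (θ : Profile N) (rs : Finset N) (extra : Multiset ℝ≥0) :
    List N → Finset N → ℕ → (N → ℕ) × (N → ℝ≥0)
  | [], _, _ => (fun _ => 0, fun _ => 0)
  | i :: rest, W, k' =>
    let p : ℝ≥0∞ :=
      kthHighest (((NhatMinus θ rs i \ W).val.map fun j => (θ j).1) + extra) k'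
    if (((θ i).1 : ℝ≥0∞)) ≥ p then
      let out := runAux θ rs extra rest (insert i W) (k' - 1)
      (Function.update out.1 i 1, Function.update out.2 i p.toNNReal)
    else
      let out := runAux θ rs extra rest W k'
      (Function.update out.1 i 0, Function.update out.2 i 0)

/-- The distance-based mechanism: `.1` is the allocation rule `f` (each buyer is mapped
to `1` if she wins a unit and to `0` otherwise; unconnected buyers get `0`) and `.2` is
the payment rule `t` (unconnected buyers and losers pay `0`). -/
noncomputable def DBM (k : ℕ) (θ : Profile N) (rs : Finset N) : (N → ℕ) × (N → ℝ≥0) :=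
  runAux θ rs 0 (prioList θ rs) ∅ k

/-- The distance-based mechanism with reserve price `vh`: `k` dummy buyers of value `vh`,
attached directly to the seller only (hence lying in every `N̂₋ᵢ` and never being
descendants of a real buyer), are added to every price pool, but they are never processed
as bidders and never win a unit. -/
noncomputable def DBMres (k : ℕ) (vh : ℝ≥0) (θ : Profile N) (rs : Finset N) :
    (N → ℕ) × (N → ℝ≥0) :=
  runAux θ rs (Multiset.replicate k vh) (prioList θ rs) ∅ k

/-- The No-Diffusion-VCG mechanism: VCG applied to the direct buyers only. -/
noncomputable def NDVCG (k : ℕ) (θ : Profile N) (rs : Finset N) : (N → ℕ) × (N → ℝ≥0) :=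
  (fun i => if i ∈ rs ∧ (((θ i).1 : ℝ≥0∞)) ≥ vstar θ (rs.erase i) k then 1 else 0,
   fun i => if i ∈ rs ∧ (((θ i).1 : ℝ≥0∞)) ≥ vstar θ (rs.erase i) k
     then (vstar θ (rs.erase i) k).toNNReal else 0)

/-- The FCFS-F mechanism: the first `k` connected buyers in the priority order get a
unit for free. -/
noncomputable def FCFS (k : ℕ) (θ : Profile N) (rs : Finset N) : (N → ℕ) × (N → ℝ≥0) :=
  (fun i => if i ∈ (prioList θ rs).take k then 1 else 0, fun _ => 0)


set_option linter.unusedSectionVars false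
set_option linter.unusedVariables false

-- sublist antisymmetry in a nodup list
lemma sublist_pair_antisymm {α : Type*} {a b : α} :
    ∀ {l : List α}, l.Nodup → List.Sublist [a, b] l → List.Sublist [b, a] l → a = b := by
  intro l
  induction l with
  | nil => intro _ h; simp at h
  | cons c t ih =>
    intro hn h1 h2
    rcases List.nodup_cons.mp hn with ⟨hc, hnt⟩
    cases h1 with
    | cons _ h1' =>
      cases h2 with
      | cons _ h2' => exact ih hnt h1' h2'
      | cons_cons h2' =>
        exact absurd (h1'.subset (by simp)) hc
    | cons_cons h1' =>
      cases h2 with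
      | cons _ h2' => exact absurd (h2'.subset (by simp)) hc
      | cons_cons h2' => rfl

lemma pairwise_lex (d : N → ℕ∞) (L : List N) (hL : L.Pairwise (· < ·)) :
    (L.mergeSort (fun a b => decide (d a ≤ d b))).Pairwise
      (fun a b => d a < d b ∨ (d a = d b ∧ a < b)) := by
  set le := fun a b : N => decide (d a ≤ d b) with hle
  have trans : ∀ a b c, le a b → le b c → le a c := by
    intro a b c; simp only [hle, decide_eq_true_eq]; exact le_trans
  have total : ∀ a b, le a b || le b a := by
    intro a b; simp only [hle, Bool.or_eq_true, decide_eq_true_eq]; exact le_total _ _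
  have hs : (L.mergeSort le).Pairwise (fun a b => le a b) := by
    simpa using List.pairwise_mergeSort trans total L
  have hndL : L.Nodup := hL.imp ne_of_lt
  have hnd : (L.mergeSort le).Nodup := (List.mergeSort_perm L le).nodup_iff.mpr hndL
  rw [List.pairwise_iff_forall_sublist]
  intro a b hab
  have hleab : d a ≤ d b := by
    have := List.pairwise_iff_forall_sublist.mp hs hab
    simpa [hle] using this
  rcases lt_or_eq_of_le hleab with h | h
  · exact Or.inl h
  · right
    refine ⟨h, ?_⟩
    have hne : a ≠ b := by
      intro hab'
      subst hab'
      have := hnd.sublist hab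
      simp at this
    rcases lt_or_gt_of_ne hne with h' | h'
    · exact h'
    · -- b < a: build [b,a] <+ L, then <+ mergeSort, contradiction
      exfalso
      have haL : a ∈ L := (List.mem_mergeSort).mp (hab.subset (by simp))
      have hbL : b ∈ L := (List.mem_mergeSort).mp (hab.subset (by simp))
      obtain ⟨l₁, l₂, rfl⟩ := List.append_of_mem hbL
      have haL2 : a ∈ l₂ := by
        rcases List.mem_append.mp haL with h1 | h2
        · have := (List.pairwise_append.mp hL).2.2 a h1 b (by simp)
          exact absurd this (not_lt_of_gt h')
        · rcases List.mem_cons.mp h2 with h3 | h3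
          · exact absurd h3 hne
          · exact h3
      have hsub : List.Sublist [b, a] (l₁ ++ b :: l₂) :=
        ((List.singleton_sublist.mpr haL2).cons_cons b).trans (List.sublist_append_right _ _)
      have hba : le b a := by simp [hle, h.ge]
      have := List.pair_sublist_mergeSort trans total hba hsub
      exact hne ((sublist_pair_antisymm hnd this hab).symm)

lemma mem_take_iff {R : N → N → Prop} (hirr : ∀ a, ¬ R a a)
    {M : List N} (hP : M.Pairwise R) {i : N} (hi : i ∈ M) (k : ℕ)
    (hasym : ∀ a b, R a b → ¬ R b a) :
    i ∈ M.take k ↔ (M.filter (fun j => decide (R j i))).length < k := by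
  obtain ⟨l₁, l₂, rfl⟩ := List.append_of_mem hi
  rw [List.pairwise_append] at hP
  have h₁ : ∀ a ∈ l₁, R a i := fun a ha => hP.2.2 a ha i (by simp)
  have hi1 : i ∉ l₁ := fun h => hirr i (h₁ i h)
  have hfilt : ((l₁ ++ i :: l₂).filter (fun j => decide (R j i))).length = l₁.length := by
    rw [List.filter_append]
    have e1 : l₁.filter (fun j => decide (R j i)) = l₁ :=
      List.filter_eq_self.mpr (fun a ha => by simpa using h₁ a ha)
    have e2 : (i :: l₂).filter (fun j => decide (R j i)) = [] := by
      apply List.filter_eq_nil_iff.mpr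
      intro a ha
      rcases List.mem_cons.mp ha with rfl | ha'
      · simpa using hirr a
      · have := (List.pairwise_cons.mp hP.2.1).1 a ha'
        simpa using hasym _ _ this
    rw [e1, e2]
    simp
  rw [hfilt]
  constructor
  · intro h
    by_contra hk
    push_neg at hk
    rw [List.take_append, Nat.sub_eq_zero_of_le hk] at h
    simp only [List.take_zero, List.append_nil] at h
    exact hi1 (List.take_subset _ _ h)
  · intro h
    rw [List.take_append]
    have : k - l₁.length ≠ 0 := by omega
    obtain ⟨m, hm⟩ := Nat.exists_eq_succ_of_ne_zero this
    rw [hm]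
    simp

lemma reachIn_mono {θ₁ θ₂ : Profile N} {rs : Finset N}
    (h : ∀ x, (θ₁ x).2 ⊆ (θ₂ x).2) :
    ∀ m j, reachIn θ₁ rs m j → reachIn θ₂ rs m j := by
  intro m
  induction m with
  | zero => intro j hj; exact hj
  | succ m ih =>
    rintro j ⟨a, ha, hja⟩
    exact ⟨a, ih a ha, h a hja⟩

lemma reachIn_back {θ₁ θ₂ : Profile N} {rs : Finset N} {i : N}
    (h : ∀ x, x ≠ i → (θ₂ x).2 = (θ₁ x).2) :
    ∀ m j, reachIn θ₂ rs m j →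
      (∃ m' ≤ m, reachIn θ₁ rs m' j) ∨ (∃ m' < m, reachIn θ₁ rs m' i) := by
  intro m
  induction m with
  | zero => intro j hj; exact Or.inl ⟨0, le_refl _, hj⟩
  | succ m ih =>
    rintro j ⟨a, ha, hja⟩
    rcases ih a ha with ⟨m', hm', hr⟩ | ⟨m', hm', hr⟩
    · by_cases hai : a = i
      · subst hai
        exact Or.inr ⟨m', Nat.lt_succ_of_le hm', hr⟩
      · rw [h a hai] at hja
        exact Or.inl ⟨m' + 1, Nat.succ_le_succ hm', ⟨a, hr, hja⟩⟩
    · exact Or.inr ⟨m', Nat.lt_succ_of_lt hm', hr⟩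

lemma dNet_mono {θ₁ θ₂ : Profile N} {rs : Finset N}
    (h : ∀ x, (θ₁ x).2 ⊆ (θ₂ x).2) (j : N) :
    dNet θ₂ rs j ≤ dNet θ₁ rs j := by
  apply sInf_le_sInf
  rintro n ⟨m, hm, rfl⟩
  exact ⟨m, reachIn_mono h m j hm, rfl⟩

lemma dNet_back {θ₁ θ₂ : Profile N} {rs : Finset N} {i : N}
    (h : ∀ x, x ≠ i → (θ₂ x).2 = (θ₁ x).2) (j : N) :
    min (dNet θ₁ rs j) (dNet θ₁ rs i) ≤ dNet θ₂ rs j := by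
  apply le_sInf
  rintro n ⟨m, hm, rfl⟩
  rcases reachIn_back h m j hm with ⟨m', hm', hr⟩ | ⟨m', hm', hr⟩
  · refine le_trans (min_le_left _ _) (le_trans (sInf_le ⟨m', hr, rfl⟩) ?_)
    exact add_le_add_left (by exact_mod_cast hm') 1
  · refine le_trans (min_le_right _ _) (le_trans (sInf_le ⟨m', hr, rfl⟩) ?_)
    exact add_le_add_left (by exact_mod_cast hm'.le) 1

lemma prio_filter_length (θ : Profile N) (rs : Finset N) (R : N → N → Prop) (i : N) :
    ((prioList θ rs).filter (fun j => decide (R j i))).length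
      = ((Nhat θ rs).filter (fun j => R j i)).card := by
  rw [← List.countP_eq_length_filter]
  have h1 : (prioList θ rs).countP (fun j => decide (R j i))
      = ((Nhat θ rs).sort (· ≤ ·)).countP (fun j => decide (R j i)) :=
    (List.mergeSort_perm _ _).countP_eq _
  rw [h1, (Finset.sort_perm_toList _ _).countP_eq]
  rw [Finset.filter, Finset.card_def, ← Multiset.countP_eq_card_filter]
  rw [← Finset.coe_toList (Nhat θ rs), Multiset.coe_countP]

/-- **Proposition 5, FCFS-F part.** In the FCFS-F mechanism, for every
buyer `i` with true type `(v, r)`, reporting `(v, ∅)` (the true value while hiding all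
followers) is a dominant strategy: for every profile of reports of the others and every
report `(v', r')` with `r' ⊆ r`, the utility from reporting `(v, ∅)` is at least the
utility from reporting `(v', r')`. -/
theorem FCFS_hiding_dominant (k : ℕ) (θ : Profile N) (rs : Finset N) (i : N)
    (v : ℝ≥0) (r : Finset N) (v' : ℝ≥0) (r' : Finset N) (hr : r' ⊆ r) :
    (v : ℝ) * ((FCFS k (Function.update θ i (v, ∅)) rs).1 i : ℝ) -
        ((FCFS k (Function.update θ i (v, ∅)) rs).2 i : ℝ) ≥
      (v : ℝ) * ((FCFS k (Function.update θ i (v', r')) rs).1 i : ℝ) -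
        ((FCFS k (Function.update θ i (v', r')) rs).2 i : ℝ) := by
  set θ₁ := Function.update θ i (v, ∅) with hθ₁
  set θ₂ := Function.update θ i (v', r') with hθ₂
  have hsub : ∀ x, (θ₁ x).2 ⊆ (θ₂ x).2 := by
    intro x
    by_cases hx : x = i
    · subst hx; simp [hθ₁, hθ₂]
    · simp [hθ₁, hθ₂, Function.update_of_ne hx]
  have heq2 : ∀ x, x ≠ i → (θ₂ x).2 = (θ₁ x).2 := by
    intro x hx; simp [hθ₁, hθ₂, Function.update_of_ne hx]
  have key : i ∈ (prioList θ₂ rs).take k → i ∈ (prioList θ₁ rs).take k := by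
    intro h2
    set d₁ := dNet θ₁ rs with hd₁
    set d₂ := dNet θ₂ rs with hd₂
    set R₁ : N → N → Prop := fun a b => d₁ a < d₁ b ∨ (d₁ a = d₁ b ∧ a < b) with hR₁
    set R₂ : N → N → Prop := fun a b => d₂ a < d₂ b ∨ (d₂ a = d₂ b ∧ a < b) with hR₂
    have hirr : ∀ (d : N → ℕ∞) (a : N), ¬ (d a < d a ∨ (d a = d a ∧ a < a)) := by
      intro d a; simp
    have hasym : ∀ (d : N → ℕ∞) (a b : N),
        (d a < d b ∨ (d a = d b ∧ a < b)) → ¬ (d b < d a ∨ (d b = d a ∧ b < a)) := by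
      intro d a b h
      rcases h with h | ⟨h, h'⟩
      · rintro (h2 | ⟨h2, -⟩)
        · exact absurd h2 (not_lt_of_gt h)
        · exact absurd h2.symm (ne_of_lt h)
      · rintro (h2 | ⟨-, h2⟩)
        · exact absurd h (ne_of_gt h2)
        · exact absurd h' (not_lt_of_gt h2)
    have hP₁ : (prioList θ₁ rs).Pairwise R₁ :=
      pairwise_lex d₁ _ (Finset.sortedLT_sort _).pairwise
    have hP₂ : (prioList θ₂ rs).Pairwise R₂ :=
      pairwise_lex d₂ _ (Finset.sortedLT_sort _).pairwise
    have hiM2 : i ∈ prioList θ₂ rs := List.mem_of_mem_take h2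
    have hc2 : Connected θ₂ rs i := by
      have h' : i ∈ Nhat θ₂ rs := Finset.mem_sort (α := N) (· ≤ ·) |>.mp
        ((List.mem_mergeSort).mp hiM2)
      simpa [Nhat] using h'
    have hc1 : Connected θ₁ rs i := by
      obtain ⟨m, hm⟩ := hc2
      rcases reachIn_back heq2 m i hm with ⟨m', _, hr'⟩ | ⟨m', _, hr'⟩ <;> exact ⟨m', hr'⟩
    have hiM1 : i ∈ prioList θ₁ rs :=
      (List.mem_mergeSort).mpr ((Finset.mem_sort _).mpr (by simpa [Nhat] using hc1))
    have hdi : d₂ i = d₁ i :=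
      le_antisymm (dNet_mono hsub i) (by simpa using dNet_back heq2 i)
    rw [mem_take_iff (hirr d₁) hP₁ hiM1 k (hasym d₁)]
    rw [mem_take_iff (hirr d₂) hP₂ hiM2 k (hasym d₂)] at h2
    have e1 := prio_filter_length θ₁ rs R₁ i
    have e2 := prio_filter_length θ₂ rs R₂ i
    refine lt_of_le_of_lt (le_of_eq e1) (lt_of_le_of_lt (Finset.card_le_card ?_)
      (lt_of_le_of_lt (le_of_eq e2.symm) h2))
    intro j hj
    simp only [Finset.mem_filter] at hj ⊢
    obtain ⟨hjN, hR⟩ := hj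
    have hconn₁ : Connected θ₁ rs j := by simpa [Nhat] using hjN
    have hconn₂ : j ∈ Nhat θ₂ rs := by
      obtain ⟨m, hm⟩ := hconn₁
      simp only [Nhat, Finset.mem_filter, Finset.mem_univ, true_and]
      exact ⟨m, reachIn_mono hsub m j hm⟩
    refine ⟨hconn₂, ?_⟩
    rcases hR with hlt | ⟨heqd, hji⟩
    · exact Or.inl (lt_of_le_of_lt (dNet_mono hsub j) (by rw [hdi]; exact hlt))
    · right
      refine ⟨?_, hji⟩
      have hj2 : d₂ j = d₁ j := by
        refine le_antisymm (dNet_mono hsub j) ?_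
        have hmin := dNet_back (rs := rs) heq2 j
        rwa [min_eq_left (le_of_eq heqd)] at hmin
      rw [hj2, hdi, heqd]
  simp only [FCFS]
  by_cases h2 : i ∈ (prioList θ₂ rs).take k
  · simp [h2, key h2]
  · by_cases h1 : i ∈ (prioList θ₁ rs).take k <;> simp [h1, h2] <;> positivity

end SNA
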